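/- Let n ≥ 1 and let f : ℝⁿ → ℝ be continuously differentiable. For every compact set X₀ ⊆ ℝⁿ there exists T > 0 such that for every ε > 0 there exists ᾱ > 0 such that for every α ∈ (0, ᾱ], every k̄ ∈ ℕ, and every cyclic coordinate descent trajectory (x_k)_{k∈ℕ} of f with step size α satisfying x_{k̄} ∈ X₀, there exists a differentiable x : [0, T] → ℝⁿ with x(0) ∈ X₀, x'(t) = −∇f(x(t)) for all t ∈ [0, T], and ‖x_k − x((k − k̄)α)‖ ≤ ε for all k ∈ {k̄, …, k̄ + ⌊T/α⌋}. (Paper's Proposition 4.2: the random-permutations cyclic coordinate descent method is approximated by subgradient trajectories of continuously differentiable functions; for such f the Clarke subdifferential is {∇f} and the multiplicative constant is 1.) -/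

import Mathlib

set_option maxHeartbeats 10000000
set_option synthInstance.maxHeartbeats 400000
open Metric Set MeasureTheory intervalIntegral Filter Topology

set_option linter.unusedSectionVars false

section CCDAux
variable {G : Type*} [NormedAddCommGroup G] [NormedSpace ℝ G] [CompleteSpace G]

noncomputable def ccdU (α : ℝ) (N : ℕ) (v : ℕ → G) (s : ℝ) : G := v (min ⌊s/α⌋₊ N)

noncomputable def ccdInterp (α : ℝ) (N : ℕ) (A0 : G) (v : ℕ → G) (t : ℝ) : G :=
  A0 + ∫ s in (0:ℝ)..t, ccdU α N v s

theorem fin_telescope {H : Type*} [AddCommGroup H] : ∀ (m : ℕ) (w : Fin (m+1) → H),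
    w (Fin.last m) - w 0 = ∑ i : Fin m, (w i.succ - w i.castSucc) := by
  intro m
  induction m with
  | zero => intro w; simp
  | succ m ih =>
    intro w
    have h := ih (fun i : Fin (m+1) => w i.succ)
    rw [Fin.sum_univ_succ]
    have : ∀ i : Fin m, w i.succ.succ - w i.succ.castSucc = w i.succ.succ - w i.castSucc.succ := by
      intro i; rw [Fin.succ_castSucc]
    rw [Finset.sum_congr rfl (fun i _ => this i), ← h, Fin.succ_last]
    simp [Fin.castSucc_zero]

theorem ccdU_meas (α : ℝ) (N : ℕ) (v : ℕ → G) :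
    StronglyMeasurable (ccdU α N v) :=
  (Continuous.stronglyMeasurable (continuous_of_discreteTopology (f := v))).comp_measurable
    ((Nat.measurable_floor.comp (measurable_id.div_const α)).min measurable_const)

theorem ccdU_norm {α : ℝ} {N : ℕ} {v : ℕ → G} {C : ℝ} (hb : ∀ k ≤ N, ‖v k‖ ≤ C) (s : ℝ) :
    ‖ccdU α N v s‖ ≤ C := hb _ (min_le_right _ _)

theorem ccdU_int {α : ℝ} {N : ℕ} {v : ℕ → G} {C : ℝ} (hb : ∀ k ≤ N, ‖v k‖ ≤ C) (a b : ℝ) :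
    IntervalIntegrable (ccdU α N v) volume a b := by
  refine (_root_.intervalIntegrable_const (c := C)).mono_fun
    (ccdU_meas α N v).aestronglyMeasurable.restrict ?_
  filter_upwards with s using by simpa using (ccdU_norm hb s).trans (le_abs_self C)

theorem ccdInterp_sub {α : ℝ} {N : ℕ} {v : ℕ → G} {C : ℝ} (hb : ∀ k ≤ N, ‖v k‖ ≤ C)
    (A0 : G) (s t : ℝ) :
    ccdInterp α N A0 v t - ccdInterp α N A0 v s = ∫ σ in s..t, ccdU α N v σ := by
  unfold ccdInterp
  rw [← intervalIntegral.integral_add_adjacent_intervals (ccdU_int hb 0 s) (ccdU_int hb s t)]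
  abel

theorem ccdInterp_lip {α : ℝ} {N : ℕ} {v : ℕ → G} {C : ℝ} (hb : ∀ k ≤ N, ‖v k‖ ≤ C)
    (A0 : G) (s t : ℝ) :
    ‖ccdInterp α N A0 v t - ccdInterp α N A0 v s‖ ≤ C * |t - s| := by
  rw [ccdInterp_sub hb]
  exact intervalIntegral.norm_integral_le_of_norm_le_const fun x _ => ccdU_norm hb x

theorem ccdInterp_zero (α : ℝ) (N : ℕ) (A0 : G) (v : ℕ → G) : ccdInterp α N A0 v 0 = A0 := by
  simp [ccdInterp]

theorem ccdInterp_cont {α : ℝ} {N : ℕ} {v : ℕ → G} {C : ℝ} (hb : ∀ k ≤ N, ‖v k‖ ≤ C)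
    (A0 : G) : Continuous (ccdInterp α N A0 v) := by
  have hC : 0 ≤ C := le_trans (norm_nonneg _) (hb 0 (Nat.zero_le _))
  refine LipschitzWith.continuous (K := C.toNNReal) (LipschitzWith.of_dist_le_mul fun t s => ?_)
  rw [dist_eq_norm]
  have h := ccdInterp_lip (α := α) hb A0 s t
  simpa [Real.coe_toNNReal C hC, Real.dist_eq] using h

theorem ccdU_piece {α : ℝ} (hα : 0 < α) {N : ℕ} (v : ℕ → G) {s : ℝ} (hs0 : 0 ≤ s)
    (hsN : s ≤ ((N:ℝ)+1)*α) :
    ∃ k ≤ N, (k:ℝ)*α ≤ s ∧ s ≤ ((k:ℝ)+1)*α ∧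
      ∀ σ, (k:ℝ)*α ≤ σ → σ ≤ s → ccdU α N v σ = v k := by
  by_cases hc : ⌊s/α⌋₊ ≤ N
  · refine ⟨⌊s/α⌋₊, hc, ?_, ?_, ?_⟩
    · rw [← le_div_iff₀ hα] at *
      exact Nat.floor_le (by positivity)
    · rw [← div_le_iff₀ hα]
      exact le_of_lt (Nat.lt_floor_add_one _)
    · intro σ h1 h2
      have hσ0 : 0 ≤ σ := le_trans (by positivity) h1
      have hfl : ⌊σ/α⌋₊ = ⌊s/α⌋₊ := by
        rw [Nat.floor_eq_iff (by positivity)]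
        constructor
        · rw [le_div_iff₀ hα]; exact h1
        · calc σ/α ≤ s/α := by gcongr
            _ < ⌊s/α⌋₊ + 1 := Nat.lt_floor_add_one _
      simp [ccdU, hfl, min_eq_left hc]
  · push_neg at hc
    refine ⟨N, le_refl _, ?_, hsN, ?_⟩
    · rw [← le_div_iff₀ hα]
      calc (N:ℝ) ≤ (⌊s/α⌋₊ : ℝ) := by exact_mod_cast hc.le
        _ ≤ s/α := Nat.floor_le (by positivity)
    · intro σ h1 h2
      have : N ≤ ⌊σ/α⌋₊ := by
        apply Nat.le_floor
        rw [le_div_iff₀ hα]; exact h1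
      simp [ccdU, min_eq_right this]

theorem ccdInterp_piece {α : ℝ} (hα : 0 < α) {N : ℕ} {v : ℕ → G} {C : ℝ}
    (hb : ∀ k ≤ N, ‖v k‖ ≤ C) (A0 : G) {s : ℝ} (hs0 : 0 ≤ s) (hsN : s ≤ ((N:ℝ)+1)*α) :
    ∃ k ≤ N, (k:ℝ)*α ≤ s ∧ s ≤ ((k:ℝ)+1)*α ∧ ccdU α N v s = v k ∧
      ccdInterp α N A0 v s = ccdInterp α N A0 v ((k:ℝ)*α) + (s - (k:ℝ)*α) • v k := by
  obtain ⟨k, hkN, h1, h2, h3⟩ := ccdU_piece hα v hs0 hsN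
  refine ⟨k, hkN, h1, h2, h3 s h1 (le_refl s), ?_⟩
  have key : (∫ σ in ((k:ℝ)*α)..s, ccdU α N v σ) = (s - (k:ℝ)*α) • v k := by
    rw [intervalIntegral.integral_congr (g := fun _ => v k) ?_, intervalIntegral.integral_const]
    · rw [Set.uIcc_of_le h1]
      intro σ hσ
      exact h3 σ hσ.1 hσ.2
  have hsub : ccdInterp α N A0 v s - ccdInterp α N A0 v ((k:ℝ)*α)
      = ∫ σ in ((k:ℝ)*α)..s, ccdU α N v σ := by
    unfold ccdInterp
    rw [← intervalIntegral.integral_add_adjacent_intervals (ccdU_int hb 0 _) (ccdU_int hb _ s)]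
    abel
  rw [← key, ← hsub]; abel

theorem ccdInterp_grid {α : ℝ} (hα : 0 < α) {N : ℕ} {v : ℕ → G} {C : ℝ}
    (hb : ∀ k ≤ N, ‖v k‖ ≤ C) (A0 : G) :
    ∀ k, k ≤ N → ccdInterp α N A0 v ((k:ℝ)*α) = A0 + ∑ i ∈ Finset.range k, α • v i := by
  intro k
  induction k with
  | zero => intro _; simp [ccdInterp]
  | succ k ih =>
    intro hk1
    have hk : k ≤ N := le_trans (Nat.le_succ k) hk1
    have h1 : ∀ᵐ σ : ℝ, σ ≠ ((k:ℝ)+1)*α := by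
      refine ae_iff.2 (measure_mono_null (fun σ hσ => ?_) (measure_singleton (((k:ℝ)+1)*α)))
      simpa using hσ
    have key : (∫ σ in ((k:ℝ)*α)..(((k:ℝ)+1)*α), ccdU α N v σ)
        = ∫ σ in ((k:ℝ)*α)..(((k:ℝ)+1)*α), (fun _ => v k) σ := by
      apply intervalIntegral.integral_congr_ae
      filter_upwards [h1] with σ hne hmem
      rw [Set.uIoc_of_le (by nlinarith)] at hmem
      have h4 : σ < ((k:ℝ)+1)*α := lt_of_le_of_ne hmem.2 hne
      have hσ0 : 0 ≤ σ := le_trans (by positivity) hmem.1.le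
      have hfl : ⌊σ/α⌋₊ = k := by
        rw [Nat.floor_eq_iff (by positivity)]
        exact ⟨(le_div_iff₀ hα).2 hmem.1.le, by rwa [div_lt_iff₀ hα]⟩
      simp [ccdU, hfl, min_eq_left hk]
    have hstep : ccdInterp α N A0 v (((k:ℝ)+1)*α) - ccdInterp α N A0 v ((k:ℝ)*α) = α • v k := by
      have hsub : ccdInterp α N A0 v (((k:ℝ)+1)*α) - ccdInterp α N A0 v ((k:ℝ)*α)
          = ∫ σ in ((k:ℝ)*α)..(((k:ℝ)+1)*α), ccdU α N v σ := by
        unfold ccdInterp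
        rw [← intervalIntegral.integral_add_adjacent_intervals (ccdU_int hb 0 _) (ccdU_int hb _ _)]
        abel
      rw [hsub, key, intervalIntegral.integral_const]
      congr 1
      ring
    have : ((k+1:ℕ):ℝ) = (k:ℝ)+1 := by push_cast; ring
    rw [this, ← sub_add_cancel (ccdInterp α N A0 v (((k:ℝ)+1)*α)) (ccdInterp α N A0 v ((k:ℝ)*α)),
      hstep, ih hk, Finset.sum_range_succ]
    abel

end CCDAux

/-- A cyclic coordinate descent trajectory of `f` with step size `α`: for every `k` there
are a permutation `σᵏ` of the coordinates and inner iterates `z 0, …, z n` with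
`z 0 = x k`, `z i = z (i-1) - α ∇_{σᵏ i} f (z (i-1))`, and `x (k+1) = z n`, where
`∇_i f x = (∂f/∂x_i)(x) • e_i`. -/
def IsCCDTraj {n : ℕ} (f : EuclideanSpace ℝ (Fin n) → ℝ) (α : ℝ)
    (x : ℕ → EuclideanSpace ℝ (Fin n)) : Prop :=
  ∀ k : ℕ, ∃ (σ : Equiv.Perm (Fin n)) (z : Fin (n + 1) → EuclideanSpace ℝ (Fin n)),
    z 0 = x k ∧
    (∀ i : Fin n, z i.succ
      = z i.castSucc - α • EuclideanSpace.single (σ i) (gradient f (z i.castSucc) (σ i))) ∧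
    x (k + 1) = z (Fin.last n)

theorem stmt_11 {n : ℕ} (hn : 1 ≤ n) (f : EuclideanSpace ℝ (Fin n) → ℝ)
    (hf : ContDiff ℝ 1 f)
    (X₀ : Set (EuclideanSpace ℝ (Fin n))) (hX₀ : IsCompact X₀) :
    ∃ T : ℝ, 0 < T ∧
      ∀ ε : ℝ, 0 < ε →
        ∃ ᾱ : ℝ, 0 < ᾱ ∧
          ∀ α : ℝ, 0 < α → α ≤ ᾱ → ∀ kbar : ℕ,
            ∀ xs : ℕ → EuclideanSpace ℝ (Fin n), IsCCDTraj f α xs → xs kbar ∈ X₀ →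
              ∃ x : ℝ → EuclideanSpace ℝ (Fin n),
                x 0 ∈ X₀ ∧
                (∀ t ∈ Set.Icc (0 : ℝ) T, HasDerivAt x (-gradient f (x t)) t) ∧
                ∀ k : ℕ, kbar ≤ k → k ≤ kbar + ⌊T / α⌋₊ →
                  ‖xs k - x (((k - kbar : ℕ) : ℝ) * α)‖ ≤ ε := by
  classical
  have hgc : Continuous (gradient f) :=
    (InnerProductSpace.toDual ℝ (EuclideanSpace ℝ (Fin n))).symm.continuous.comp
      (hf.continuous_fderiv one_ne_zero)
  obtain ⟨R, hR0, hXR⟩ : ∃ R, 0 < R ∧ X₀ ⊆ closedBall (0 : EuclideanSpace ℝ (Fin n)) R :=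
    hX₀.isBounded.subset_closedBall_lt 0 0
  set K : Set (EuclideanSpace ℝ (Fin n)) := closedBall 0 (R+1) with hKdef
  set K' : Set (EuclideanSpace ℝ (Fin n)) := closedBall 0 (R+2) with hK'def
  have hK : IsCompact K := isCompact_closedBall _ _
  have hK' : IsCompact K' := isCompact_closedBall _ _
  have hKK' : K ⊆ K' := closedBall_subset_closedBall (by linarith)
  obtain ⟨M0, hM0⟩ := hK'.exists_bound_of_continuousOn hgc.continuousOn
  set M : ℝ := max M0 0 with hMdef
  have hM : 0 ≤ M := le_max_right _ _
  have hMb : ∀ y ∈ K', ‖gradient f y‖ ≤ M := fun y hy => (hM0 y hy).trans (le_max_left _ _)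
  set T : ℝ := 1/(4*(n*M+1)) with hTdef
  have hT : 0 < T := by positivity
  have hTnM : T * ((n:ℝ)*M) ≤ 1/4 := by
    rw [hTdef]
    rw [div_mul_eq_mul_div, one_mul, div_le_div_iff₀ (by positivity) (by norm_num)]
    nlinarith [hM, Nat.cast_nonneg (α := ℝ) n]
  refine ⟨T, hT, ?_⟩
  intro ε hε
  by_contra hcon
  push_neg at hcon
  have hcon' := fun j : ℕ => hcon (min T (1/((j:ℝ)+1))) (lt_min hT (by positivity))
  choose αs hα0 hαle kbars xss htraj hmem hbad using hcon'
  -- basic per-j facts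
  have hαT : ∀ j, αs j ≤ T := fun j => (hαle j).trans (min_le_left _ _)
  have hαj : ∀ j, αs j ≤ 1/((j:ℝ)+1) := fun j => (hαle j).trans (min_le_right _ _)
  set N : ℕ → ℕ := fun j => ⌊T / αs j⌋₊ with hNdef
  have hNα : ∀ j, (N j : ℝ) * αs j ≤ T := by
    intro j
    rw [← le_div_iff₀ (hα0 j)]
    exact Nat.floor_le (le_of_lt (div_pos hT (hα0 j)))
  have hN1α : ∀ j, T ≤ ((N j:ℝ)+1) * αs j := by
    intro j
    rw [← div_le_iff₀ (hα0 j)]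
    exact (Nat.lt_floor_add_one _).le
  have hkey : ∀ j, (((N j:ℝ)+2)*(n:ℝ)) * (αs j * M) ≤ 1 := by
    intro j
    have h1 : ((N j:ℝ)+2) * αs j ≤ 3*T := by nlinarith [hNα j, hαT j, (hα0 j).le]
    have h2 : (0:ℝ) ≤ (n:ℝ)*M := by positivity
    calc (((N j:ℝ)+2)*(n:ℝ)) * (αs j * M) = (((N j:ℝ)+2) * αs j) * ((n:ℝ)*M) := by ring
      _ ≤ (3*T) * ((n:ℝ)*M) := by
          apply mul_le_mul_of_nonneg_right h1 h2
      _ ≤ 3 * (1/4) := by nlinarith [hTnM]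
      _ ≤ 1 := by norm_num
  set A : ℕ → ℕ → EuclideanSpace ℝ (Fin n) := fun j k => xss j (kbars j + k) with hAdef
  choose σs Z hZ0 hZrec hZlast using fun j k => htraj j (kbars j + k)
  have hA0X : ∀ j, A j 0 ∈ X₀ := fun j => hmem j
  have hA0R : ∀ j, ‖A j 0‖ ≤ R := by
    intro j
    have := hXR (hA0X j)
    rwa [mem_closedBall, dist_zero_right] at this
  have hcoord : ∀ (y : EuclideanSpace ℝ (Fin n)) (i : Fin n), |y i| ≤ ‖y‖ := by
    intro y i
    have h := abs_real_inner_le_norm (EuclideanSpace.single i (1:ℝ)) y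
    rw [EuclideanSpace.inner_single_left, EuclideanSpace.norm_single] at h
    simpa using h
  have hstepb : ∀ j k (i : Fin n), Z j k i.castSucc ∈ K' →
      ‖Z j k i.succ - Z j k i.castSucc‖ ≤ αs j * M := by
    intro j k i hmem'
    rw [hZrec j k i]
    have h1 : Z j k i.castSucc - αs j • EuclideanSpace.single (σs j k i)
        (gradient f (Z j k i.castSucc) (σs j k i)) - Z j k i.castSucc
        = -(αs j • EuclideanSpace.single (σs j k i)
            (gradient f (Z j k i.castSucc) (σs j k i))) := by abel
    rw [h1, norm_neg, norm_smul, Real.norm_eq_abs, abs_of_pos (hα0 j),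
      EuclideanSpace.norm_single]
    exact mul_le_mul_of_nonneg_left
      ((hcoord _ _).trans (hMb _ hmem')) (hα0 j).le
  -- inner chain control
  have hinner : ∀ j k, k ≤ N j + 1 → ‖A j k - A j 0‖ ≤ ((k*n:ℕ):ℝ)*(αs j * M) →
      ∀ i : Fin (n+1), ‖Z j k i - A j 0‖ ≤ ((k*n:ℕ):ℝ)*(αs j*M) + ((i:ℕ):ℝ)*(αs j*M) := by
    intro j k hk hA i
    induction i using Fin.induction with
    | zero =>
      have h0 : Z j k 0 = A j k := hZ0 j k
      simpa [h0] using hA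
    | succ i ih =>
      have hble : ((k*n:ℕ):ℝ)*(αs j*M) + ((i.castSucc:ℕ):ℝ)*(αs j*M) ≤ 1 := by
        have hi : ((i.castSucc:ℕ):ℝ) ≤ (n:ℝ) := by
          have := (i.castSucc).is_le
          exact_mod_cast this
        have hkn : ((k*n:ℕ):ℝ) ≤ ((N j:ℝ)+1)*(n:ℝ) := by
          push_cast
          have : (k:ℝ) ≤ (N j:ℝ)+1 := by exact_mod_cast hk
          nlinarith [Nat.cast_nonneg (α := ℝ) n]
        have hαM : (0:ℝ) ≤ αs j * M := mul_nonneg (hα0 j).le hM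
        nlinarith [hkey j]
      have hZmem : Z j k i.castSucc ∈ K' := by
        rw [hK'def, mem_closedBall, dist_zero_right]
        have htri : ‖Z j k i.castSucc‖ ≤ ‖A j 0‖ + ‖Z j k i.castSucc - A j 0‖ := by
          simpa using norm_add_le (A j 0) (Z j k i.castSucc - A j 0)
        have := ih
        nlinarith [hA0R j]
      have hstep := hstepb j k i hZmem
      have htri : ‖Z j k i.succ - A j 0‖
          ≤ ‖Z j k i.castSucc - A j 0‖ + ‖Z j k i.succ - Z j k i.castSucc‖ := by
        have : Z j k i.succ - A j 0
            = (Z j k i.castSucc - A j 0) + (Z j k i.succ - Z j k i.castSucc) := by abel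
        rw [this]
        exact norm_add_le _ _
      have hc : ((i.succ : Fin (n+1)):ℕ) = ((i.castSucc : Fin (n+1)):ℕ) + 1 := by
        simp [Fin.val_succ, Fin.coe_castSucc]
      rw [hc]
      push_cast
      push_cast at ih
      nlinarith [ih, hstep]
  have hAA : ∀ j k, k ≤ N j + 1 → ‖A j k - A j 0‖ ≤ ((k*n:ℕ):ℝ)*(αs j * M) := by
    intro j k
    induction k with
    | zero => simp
    | succ k ih =>
      intro hk1
      have hk : k ≤ N j + 1 := le_trans (Nat.le_succ k) hk1
      have h1 := hinner j k hk (ih hk) (Fin.last n)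
      have h2 : A j (k+1) = Z j k (Fin.last n) := hZlast j k
      rw [h2]
      have hc : ((Fin.last n : Fin (n+1)):ℕ) = n := rfl
      rw [hc] at h1
      calc ‖Z j k (Fin.last n) - A j 0‖ ≤ ((k*n:ℕ):ℝ)*(αs j*M) + ((n:ℕ):ℝ)*(αs j*M) := h1
        _ = (((k+1)*n:ℕ):ℝ)*(αs j*M) := by push_cast; ring
  have hZK' : ∀ j k, k ≤ N j + 1 → ∀ i : Fin (n+1), Z j k i ∈ K' := by
    intro j k hk i
    have h1 := hinner j k hk (hAA j k hk) i
    have hble : ((k*n:ℕ):ℝ)*(αs j*M) + ((i:ℕ):ℝ)*(αs j*M) ≤ 1 := by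
      have hi : ((i:ℕ):ℝ) ≤ (n:ℝ) := by exact_mod_cast i.is_le
      have hkn : ((k*n:ℕ):ℝ) ≤ ((N j:ℝ)+1)*(n:ℝ) := by
        push_cast
        have : (k:ℝ) ≤ (N j:ℝ)+1 := by exact_mod_cast hk
        nlinarith [Nat.cast_nonneg (α := ℝ) n]
      have hαM : (0:ℝ) ≤ αs j * M := mul_nonneg (hα0 j).le hM
      nlinarith [hkey j]
    rw [hK'def, mem_closedBall, dist_zero_right]
    have htri : ‖Z j k i‖ ≤ ‖A j 0‖ + ‖Z j k i - A j 0‖ := by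
      simpa using norm_add_le (A j 0) (Z j k i - A j 0)
    nlinarith [hA0R j]
  have hAK : ∀ j k, k ≤ N j + 1 → A j k ∈ K := by
    intro j k hk
    have h1 := hAA j k hk
    have hble : ((k*n:ℕ):ℝ)*(αs j*M) ≤ 1 := by
      have hkn : ((k*n:ℕ):ℝ) ≤ ((N j:ℝ)+1)*(n:ℝ) := by
        push_cast
        have : (k:ℝ) ≤ (N j:ℝ)+1 := by exact_mod_cast hk
        nlinarith [Nat.cast_nonneg (α := ℝ) n]
      have hαM : (0:ℝ) ≤ αs j * M := mul_nonneg (hα0 j).le hM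
      nlinarith [hkey j, Nat.cast_nonneg (α := ℝ) (k*n)]
    rw [hKdef, mem_closedBall, dist_zero_right]
    have htri : ‖A j k‖ ≤ ‖A j 0‖ + ‖A j k - A j 0‖ := by
      simpa using norm_add_le (A j 0) (A j k - A j 0)
    nlinarith [hA0R j]
  have hAK' : ∀ j k, k ≤ N j + 1 → A j k ∈ K' := fun j k hk => hKK' (hAK j k hk)
  -- distance of inner iterates to the base point of the step
  have hZfrom0 : ∀ j k, k ≤ N j + 1 → ∀ i : Fin (n+1),
      ‖Z j k i - Z j k 0‖ ≤ ((i:ℕ):ℝ)*(αs j*M) := by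
    intro j k hk i
    induction i using Fin.induction with
    | zero => simp
    | succ i ih =>
      have hstep := hstepb j k i (hZK' j k hk i.castSucc)
      have htri : ‖Z j k i.succ - Z j k 0‖
          ≤ ‖Z j k i.castSucc - Z j k 0‖ + ‖Z j k i.succ - Z j k i.castSucc‖ := by
        have h2 : Z j k i.succ - Z j k 0
            = (Z j k i.castSucc - Z j k 0) + (Z j k i.succ - Z j k i.castSucc) := by abel
        rw [h2]
        exact norm_add_le _ _
      have hc : ((i.succ : Fin (n+1)):ℕ) = ((i.castSucc : Fin (n+1)):ℕ) + 1 := by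
        simp [Fin.val_succ, Fin.coe_castSucc]
      rw [hc]
      push_cast
      push_cast at ih
      nlinarith [ih, hstep]
  -- velocities
  set v : ℕ → ℕ → EuclideanSpace ℝ (Fin n) :=
    fun j k => (αs j)⁻¹ • (A j (k+1) - A j k) with hvdef
  have htel : ∀ j k, A j (k+1) - A j k = ∑ i : Fin n, (Z j k i.succ - Z j k i.castSucc) := by
    intro j k
    have h1 : A j (k+1) = Z j k (Fin.last n) := hZlast j k
    have h2 : A j k = Z j k 0 := (hZ0 j k).symm
    rw [h1, h2]
    exact fin_telescope n (Z j k)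
  have hvb : ∀ j k, k ≤ N j + 1 → ‖v j k‖ ≤ (n:ℝ)*M := by
    intro j k hk
    have h1 : ‖A j (k+1) - A j k‖ ≤ (n:ℝ)*(αs j * M) := by
      rw [htel j k]
      calc ‖∑ i : Fin n, (Z j k i.succ - Z j k i.castSucc)‖
          ≤ ∑ i : Fin n, ‖Z j k i.succ - Z j k i.castSucc‖ := norm_sum_le _ _
        _ ≤ ∑ _i : Fin n, αs j * M :=
            Finset.sum_le_sum fun i _ => hstepb j k i (hZK' j k hk i.castSucc)
        _ = (n:ℝ)*(αs j * M) := by simp [Finset.sum_const, Finset.card_univ, mul_comm]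
    rw [hvdef]
    simp only []
    rw [norm_smul, Real.norm_eq_abs, abs_of_pos (inv_pos.2 (hα0 j))]
    calc (αs j)⁻¹ * ‖A j (k+1) - A j k‖ ≤ (αs j)⁻¹ * ((n:ℝ)*(αs j * M)) := by
          exact mul_le_mul_of_nonneg_left h1 (inv_pos.2 (hα0 j)).le
      _ = (n:ℝ)*M := by
          rw [show (n:ℝ)*(αs j * M) = αs j * ((n:ℝ)*M) by ring, ← mul_assoc,
            inv_mul_cancel₀ (ne_of_gt (hα0 j)), one_mul]
  have hsingle_sub : ∀ (i : Fin n) (a b : ℝ), EuclideanSpace.single i a - EuclideanSpace.single i b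
      = EuclideanSpace.single i (a - b) := by
    intro i a b
    ext t
    have hsub : (EuclideanSpace.single i a - EuclideanSpace.single i b) t
        = EuclideanSpace.single i a t - EuclideanSpace.single i b t := rfl
    rw [hsub]
    by_cases h : t = i <;> simp [EuclideanSpace.single_apply, h]
  have hdecomp : ∀ y : EuclideanSpace ℝ (Fin n), ∑ i, EuclideanSpace.single i (y i) = y := by
    intro y
    ext t
    rw [WithLp.ofLp_sum, Finset.sum_apply]
    simp [EuclideanSpace.single_apply]
  -- consistency of velocities with the gradient field
  have hcons : ∀ (d θ : ℝ),
      (∀ p ∈ K', ∀ q ∈ K', dist p q ≤ d → ‖gradient f p - gradient f q‖ ≤ θ) →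
      ∀ j, (n:ℝ)*(αs j * M) ≤ d → ∀ k, k ≤ N j → ‖v j k + gradient f (A j k)‖ ≤ (n:ℝ)*θ := by
    intro d θ hd j hjd k hk
    have hk1 : k ≤ N j + 1 := hk.trans (Nat.le_succ _)
    have e1 : A j (k+1) - A j k = ∑ i : Fin n,
        (-(αs j • EuclideanSpace.single (σs j k i)
          (gradient f (Z j k i.castSucc) (σs j k i)))) := by
      rw [htel j k]
      refine Finset.sum_congr rfl fun i _ => ?_
      rw [hZrec j k i]
      abel
    have e2 : gradient f (A j k) = ∑ i : Fin n,
        EuclideanSpace.single (σs j k i) ((gradient f (A j k)) (σs j k i)) := by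
      rw [Equiv.sum_comp (σs j k) (fun t => EuclideanSpace.single t ((gradient f (A j k)) t))]
      exact (hdecomp _).symm
    have hrw : v j k + gradient f (A j k) = ∑ i : Fin n,
        EuclideanSpace.single (σs j k i)
          ((gradient f (A j k)) (σs j k i) - (gradient f (Z j k i.castSucc)) (σs j k i)) := by
      calc v j k + gradient f (A j k)
          = (αs j)⁻¹ • (A j (k+1) - A j k) + gradient f (A j k) := rfl
        _ = (αs j)⁻¹ • (∑ i : Fin n, (-(αs j • EuclideanSpace.single (σs j k i)
              (gradient f (Z j k i.castSucc) (σs j k i))))) + gradient f (A j k) := by rw [← e1]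
        _ = (∑ i : Fin n, (-(EuclideanSpace.single (σs j k i)
              (gradient f (Z j k i.castSucc) (σs j k i))))) + gradient f (A j k) := by
            rw [Finset.smul_sum]
            congr 1
            refine Finset.sum_congr rfl fun i _ => ?_
            rw [smul_neg, smul_smul, inv_mul_cancel₀ (ne_of_gt (hα0 j)), one_smul]
        _ = (∑ i : Fin n, (-(EuclideanSpace.single (σs j k i)
              (gradient f (Z j k i.castSucc) (σs j k i)))))
            + ∑ i : Fin n, EuclideanSpace.single (σs j k i)
              ((gradient f (A j k)) (σs j k i)) := by rw [← e2]
        _ = ∑ i : Fin n, ((-(EuclideanSpace.single (σs j k i)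
              (gradient f (Z j k i.castSucc) (σs j k i))))
            + EuclideanSpace.single (σs j k i) ((gradient f (A j k)) (σs j k i))) := by
            rw [← Finset.sum_add_distrib]
        _ = ∑ i : Fin n, EuclideanSpace.single (σs j k i)
              ((gradient f (A j k)) (σs j k i)
                - (gradient f (Z j k i.castSucc)) (σs j k i)) := by
            refine Finset.sum_congr rfl fun i _ => ?_
            rw [← hsingle_sub]
            abel
    rw [hrw]
    calc ‖∑ i : Fin n, EuclideanSpace.single (σs j k i)
          ((gradient f (A j k)) (σs j k i) - (gradient f (Z j k i.castSucc)) (σs j k i))‖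
        ≤ ∑ i : Fin n, ‖EuclideanSpace.single (σs j k i)
          ((gradient f (A j k)) (σs j k i) - (gradient f (Z j k i.castSucc)) (σs j k i))‖ :=
          norm_sum_le _ _
      _ ≤ ∑ _i : Fin n, θ := by
          refine Finset.sum_le_sum fun i _ => ?_
          rw [EuclideanSpace.norm_single]
          have hco : |(gradient f (A j k) - gradient f (Z j k i.castSucc)) (σs j k i)|
              ≤ ‖gradient f (A j k) - gradient f (Z j k i.castSucc)‖ := hcoord _ _
          have happ : (gradient f (A j k) - gradient f (Z j k i.castSucc)) (σs j k i)
              = (gradient f (A j k)) (σs j k i) - (gradient f (Z j k i.castSucc)) (σs j k i) := rfl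
          rw [happ] at hco
          refine hco.trans ?_
          refine hd _ (hAK' j k hk1) _ (hZK' j k hk1 i.castSucc) ?_
          rw [dist_eq_norm]
          have h0 : A j k = Z j k 0 := (hZ0 j k).symm
          have h5 : ‖Z j k i.castSucc - Z j k 0‖ ≤ ((i.castSucc:ℕ):ℝ)*(αs j*M) :=
            hZfrom0 j k hk1 i.castSucc
          have h6 : ‖A j k - Z j k i.castSucc‖ = ‖Z j k i.castSucc - Z j k 0‖ := by
            rw [h0, norm_sub_rev]
          rw [h6]
          refine h5.trans (le_trans ?_ hjd)
          have : ((i.castSucc:ℕ):ℝ) ≤ (n:ℝ) := by exact_mod_cast (i.castSucc).is_le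
          have hαM : (0:ℝ) ≤ αs j * M := mul_nonneg (hα0 j).le hM
          nlinarith
      _ = (n:ℝ)*θ := by simp [Finset.sum_const, Finset.card_univ, mul_comm]
  -- interpolated curves
  set γ : ℕ → ℝ → EuclideanSpace ℝ (Fin n) :=
    fun j => ccdInterp (αs j) (N j) (A j 0) (v j) with hγdef
  have hvb' : ∀ j, ∀ k ≤ N j, ‖v j k‖ ≤ (n:ℝ)*M :=
    fun j k hk => hvb j k (hk.trans (Nat.le_succ _))
  have hγ0 : ∀ j, γ j 0 = A j 0 := fun j => ccdInterp_zero _ _ _ _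
  have hγcont : ∀ j, Continuous (γ j) := fun j => ccdInterp_cont (hvb' j) _
  have hγlip : ∀ j s t, ‖γ j t - γ j s‖ ≤ ((n:ℝ)*M) * |t - s| :=
    fun j s t => ccdInterp_lip (hvb' j) _ s t
  have hγsub : ∀ j s t, γ j t - γ j s = ∫ σ in s..t, ccdU (αs j) (N j) (v j) σ :=
    fun j s t => ccdInterp_sub (hvb' j) _ s t
  have hγgrid : ∀ j, ∀ k ≤ N j, γ j ((k:ℝ) * αs j) = A j k := by
    intro j k hk
    rw [hγdef]
    simp only []
    rw [ccdInterp_grid (hα0 j) (hvb' j) (A j 0) k hk]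
    have hterm : ∀ i ∈ Finset.range k, αs j • v j i = A j (i+1) - A j i := by
      intro i _
      rw [hvdef]
      simp only []
      rw [smul_inv_smul₀ (ne_of_gt (hα0 j))]
    rw [Finset.sum_congr rfl hterm, Finset.sum_range_sub (fun i => A j i)]
    abel
  have hγK : ∀ j, ∀ t ∈ Icc (0:ℝ) T, γ j t ∈ K := by
    intro j t ht
    rw [hKdef, mem_closedBall, dist_zero_right]
    have h1 : ‖γ j t - γ j 0‖ ≤ ((n:ℝ)*M) * |t - 0| := hγlip j 0 t
    rw [sub_zero] at h1
    have h2 : |t| ≤ T := by rw [abs_of_nonneg ht.1]; exact ht.2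
    have h3 : ((n:ℝ)*M) * |t| ≤ ((n:ℝ)*M)*T := mul_le_mul_of_nonneg_left h2 (by positivity)
    have htri : ‖γ j t‖ ≤ ‖γ j 0‖ + ‖γ j t - γ j 0‖ := by
      simpa using norm_add_le (γ j 0) (γ j t - γ j 0)
    have hns : ‖γ j 0‖ = ‖A j 0‖ := by rw [hγ0 j]
    rw [hns] at htri
    nlinarith [hA0R j, hTnM, h1, h3, htri]
  have hγK' : ∀ j, ∀ t ∈ Icc (0:ℝ) T, γ j t ∈ K' := fun j t ht => hKK' (hγK j t ht)
  -- uniform continuity of the gradient on K'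
  have hUCfull : ∀ θ : ℝ, 0 < θ → ∃ d, 0 < d ∧ ∀ p ∈ K', ∀ q ∈ K', dist p q ≤ d →
      ‖gradient f p - gradient f q‖ ≤ θ := by
    intro θ hθ
    have h1 : UniformContinuousOn (gradient f) K' :=
      hK'.uniformContinuousOn_of_continuous hgc.continuousOn
    rw [Metric.uniformContinuousOn_iff_le] at h1
    obtain ⟨d, hd, h2⟩ := h1 θ hθ
    exact ⟨d, hd, fun p hp q hq hpq => by rw [← dist_eq_norm]; exact h2 p hp q hq hpq⟩
  have hsmall : ∀ d : ℝ, 0 < d → ∃ J : ℕ, ∀ j, J ≤ j → (n:ℝ)*(αs j * M) ≤ d := by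
    intro d hd
    obtain ⟨J, hJ⟩ := exists_nat_gt ((n:ℝ)*M/d)
    refine ⟨J, fun j hj => ?_⟩
    have h1 : αs j ≤ 1/((j:ℝ)+1) := hαj j
    have hj1 : (J:ℝ) ≤ (j:ℝ) := by exact_mod_cast hj
    have h2 : (n:ℝ)*M < d*((J:ℝ)+1) := by
      rw [div_lt_iff₀ hd] at hJ
      nlinarith [hd]
    have h4 : (0:ℝ) < (j:ℝ)+1 := by positivity
    have hnM : (0:ℝ) ≤ (n:ℝ)*M := by positivity
    have h5 : (n:ℝ)*M*(αs j) ≤ (n:ℝ)*M*(1/((j:ℝ)+1)) := mul_le_mul_of_nonneg_left h1 hnM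
    calc (n:ℝ)*(αs j * M) = (n:ℝ)*M*(αs j) := by ring
      _ ≤ (n:ℝ)*M*(1/((j:ℝ)+1)) := h5
      _ ≤ d := by
          rw [mul_one_div, div_le_iff₀ h4]
          nlinarith
  -- the interpolated curves are approximate solutions
  have happrox : ∀ θ : ℝ, 0 < θ → ∃ J : ℕ, ∀ j, J ≤ j → ∀ t ∈ Icc (0:ℝ) T,
      ‖γ j t - (A j 0 + ∫ s in (0:ℝ)..t, -gradient f (γ j s))‖ ≤ θ := by
    intro θ hθ
    set θ₁ := θ/(((n:ℝ)+1)*(T+1)) with hθ₁def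
    have hθ₁ : 0 < θ₁ := by positivity
    obtain ⟨d, hd, hdprop⟩ := hUCfull θ₁ hθ₁
    obtain ⟨J, hJ⟩ := hsmall d hd
    refine ⟨J, fun j hj t ht => ?_⟩
    have hαd := hJ j hj
    have hint_g : IntervalIntegrable (fun s => gradient f (γ j s)) volume 0 t :=
      (hgc.comp (hγcont j)).intervalIntegrable 0 t
    have hint_u : IntervalIntegrable (ccdU (αs j) (N j) (v j)) volume 0 t :=
      ccdU_int (hvb' j) 0 t
    have e1 : γ j t - γ j 0 = ∫ s in (0:ℝ)..t, ccdU (αs j) (N j) (v j) s := hγsub j 0 t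
    rw [hγ0 j] at e1
    have e0 : γ j t - (A j 0 + ∫ s in (0:ℝ)..t, -gradient f (γ j s))
        = ∫ s in (0:ℝ)..t, (ccdU (αs j) (N j) (v j) s + gradient f (γ j s)) := by
      rw [intervalIntegral.integral_add hint_u hint_g, intervalIntegral.integral_neg, ← e1]
      abel
    have hbound : ∀ s ∈ Set.uIoc (0:ℝ) t,
        ‖ccdU (αs j) (N j) (v j) s + gradient f (γ j s)‖ ≤ ((n:ℝ)+1)*θ₁ := by
      intro s hs
      rw [Set.uIoc_of_le ht.1] at hs
      have hs0 : 0 ≤ s := hs.1.le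
      have hsT : s ≤ T := hs.2.trans ht.2
      have hsN : s ≤ ((N j:ℝ)+1)*αs j := hsT.trans (hN1α j)
      obtain ⟨k, hkN, hk1, hk2, hk3, hk4⟩ := ccdInterp_piece (hα0 j) (hvb' j) (A j 0) hs0 hsN
      have hgs : γ j s = A j k + (s - (k:ℝ)*αs j) • v j k := by
        have hgg := hγgrid j k hkN
        rw [hγdef] at hgg ⊢
        simp only [] at hgg ⊢
        rw [hk4, hgg]
      have hdist1 : ‖γ j s - A j k‖ ≤ αs j * ((n:ℝ)*M) := by
        rw [hgs]
        have : A j k + (s - (k:ℝ)*αs j) • v j k - A j k = (s - (k:ℝ)*αs j) • v j k := by abel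
        rw [this, norm_smul, Real.norm_eq_abs]
        have habs : |s - (k:ℝ)*αs j| ≤ αs j := by
          rw [abs_of_nonneg (by linarith)]
          nlinarith [hk1, hk2]
        exact mul_le_mul habs (hvb' j k hkN) (norm_nonneg _) (hα0 j).le
      have hmem1 : γ j s ∈ K' := hγK' j s ⟨hs0, hsT⟩
      have hmem2 : A j k ∈ K' := hAK' j k (hkN.trans (Nat.le_succ _))
      have hgd : ‖gradient f (γ j s) - gradient f (A j k)‖ ≤ θ₁ := by
        apply hdprop _ hmem1 _ hmem2
        rw [dist_eq_norm]
        refine hdist1.trans (le_trans (le_of_eq (by ring)) hαd)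
      have hvg : ‖v j k + gradient f (A j k)‖ ≤ (n:ℝ)*θ₁ := hcons d θ₁ hdprop j hαd k hkN
      rw [hk3]
      calc ‖v j k + gradient f (γ j s)‖
          = ‖(v j k + gradient f (A j k)) + (gradient f (γ j s) - gradient f (A j k))‖ := by
            congr 1
            abel
        _ ≤ ‖v j k + gradient f (A j k)‖ + ‖gradient f (γ j s) - gradient f (A j k)‖ :=
            norm_add_le _ _
        _ ≤ (n:ℝ)*θ₁ + θ₁ := add_le_add hvg hgd
        _ = ((n:ℝ)+1)*θ₁ := by ring
    rw [e0]
    refine (intervalIntegral.norm_integral_le_of_norm_le_const hbound).trans ?_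
    rw [sub_zero]
    have h2 : |t| ≤ T := by rw [abs_of_nonneg ht.1]; exact ht.2
    have ha : (0:ℝ) < (n:ℝ)+1 := by positivity
    have hb : (0:ℝ) < T+1 := by linarith
    calc ((n:ℝ)+1)*θ₁ * |t| ≤ ((n:ℝ)+1)*θ₁ * T := by
          apply mul_le_mul_of_nonneg_left h2 (by positivity)
      _ ≤ θ := by
          rw [hθ₁def]
          have key : ((n:ℝ)+1) * (θ / (((n:ℝ)+1)*(T+1))) * T = θ * (T/(T+1)) := by
            field_simp
          rw [key]
          have hfrac : T/(T+1) ≤ 1 := by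
            rw [div_le_one hb]
            linarith
          nlinarith [hθ.le]
  -- pass to bounded continuous functions on [0, T] and extract a uniform limit
  let Γ : ℕ → BoundedContinuousFunction (Set.Icc (0:ℝ) T) (EuclideanSpace ℝ (Fin n)) :=
    fun j => BoundedContinuousFunction.mkOfCompact
      ⟨fun t => γ j t.1, (hγcont j).comp continuous_subtype_val⟩
  have hΓapply : ∀ j (t : Set.Icc (0:ℝ) T), Γ j t = γ j t.1 := fun j t => rfl
  have hin_s : ∀ (h : BoundedContinuousFunction (Set.Icc (0:ℝ) T) (EuclideanSpace ℝ (Fin n)))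
      (x : Set.Icc (0:ℝ) T), h ∈ Set.range Γ → h x ∈ K := by
    rintro h x ⟨j, rfl⟩
    rw [hΓapply]
    exact hγK j x.1 x.2
  have hequi : Equicontinuous
      (fun (i : Set.range Γ) => ((i.1 : BoundedContinuousFunction _ _) :
        Set.Icc (0:ℝ) T → EuclideanSpace ℝ (Fin n))) := by
    apply Metric.equicontinuous_of_continuity_modulus (fun r => ((n:ℝ)*M) * r)
    · have hmul : Tendsto (fun r : ℝ => ((n:ℝ)*M) * r) (nhds 0) (nhds (((n:ℝ)*M) * 0)) :=
        (continuous_const.mul continuous_id).tendsto 0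
      simpa using hmul
    · intro x y i
      obtain ⟨j, hj⟩ := i.2
      have hx : (i.1 : Set.Icc (0:ℝ) T → EuclideanSpace ℝ (Fin n)) x = γ j x.1 := by
        rw [← hj]; rfl
      have hy : (i.1 : Set.Icc (0:ℝ) T → EuclideanSpace ℝ (Fin n)) y = γ j y.1 := by
        rw [← hj]; rfl
      rw [hx, hy, dist_eq_norm]
      refine (hγlip j y.1 x.1).trans (le_of_eq ?_)
      rw [Subtype.dist_eq, Real.dist_eq]
  have hcompact := BoundedContinuousFunction.arzela_ascoli K hK (Set.range Γ) hin_s hequi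
  have hmemcl : ∀ j, Γ j ∈ closure (Set.range Γ) := fun j => subset_closure ⟨j, rfl⟩
  obtain ⟨h, hhmem, φ, hφmono, hφtend⟩ := hcompact.tendsto_subseq hmemcl
  have hdistconv : ∀ θ : ℝ, 0 < θ → ∃ L : ℕ, ∀ l, L ≤ l → dist (Γ (φ l)) h ≤ θ := by
    intro θ hθ
    obtain ⟨L, hL⟩ := (Metric.tendsto_atTop.1 hφtend) θ hθ
    exact ⟨L, fun l hl => (hL l hl).le⟩
  -- the limit curve
  set xfun : ℝ → EuclideanSpace ℝ (Fin n) := fun t => h (Set.projIcc 0 T hT.le t) with hxdef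
  have hxval : ∀ t (ht : t ∈ Icc (0:ℝ) T), xfun t = h ⟨t, ht⟩ := by
    intro t ht
    rw [hxdef]
    simp only []
    congr 1
    exact Set.projIcc_of_mem hT.le ht
  have hxcont : Continuous xfun := h.continuous.comp continuous_projIcc
  have hptconv : ∀ (t : Set.Icc (0:ℝ) T),
      Tendsto (fun l => γ (φ l) t.1) atTop (nhds (h t)) := by
    intro t
    rw [tendsto_iff_dist_tendsto_zero]
    refine squeeze_zero (g := fun l => dist (Γ (φ l)) h) (fun l => dist_nonneg) (fun l => ?_) ?_
    · show dist (γ (φ l) t.1) (h t) ≤ dist (Γ (φ l)) h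
      rw [← hΓapply]
      exact BoundedContinuousFunction.dist_coe_le_dist t
    · exact tendsto_iff_dist_tendsto_zero.1 hφtend
  have h0mem : (0:ℝ) ∈ Icc (0:ℝ) T := ⟨le_refl 0, hT.le⟩
  have hx0X : xfun 0 ∈ X₀ := by
    rw [hxval 0 h0mem]
    refine hX₀.isClosed.mem_of_tendsto (hptconv ⟨0, h0mem⟩) ?_
    filter_upwards with l
    simpa [hγ0 (φ l)] using hA0X (φ l)
  have hhK : ∀ t : Set.Icc (0:ℝ) T, h t ∈ K := by
    intro t
    refine hK.isClosed.mem_of_tendsto (hptconv t) ?_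
    filter_upwards with l using hγK (φ l) t.1 t.2
  have hxK' : ∀ t ∈ Icc (0:ℝ) T, xfun t ∈ K' := by
    intro t ht
    rw [hxval t ht]
    exact hKK' (hhK ⟨t, ht⟩)
  -- integral equation for the limit curve
  have hxeq : ∀ t ∈ Icc (0:ℝ) T, xfun t = xfun 0 + ∫ s in (0:ℝ)..t, -gradient f (xfun s) := by
    intro t ht
    have hDsmall : ∀ θ : ℝ, 0 < θ →
        ‖xfun t - (xfun 0 + ∫ s in (0:ℝ)..t, -gradient f (xfun s))‖ ≤ θ := by
      intro θ hθ
      set θ₂ := θ/(4*(T+1)) with hθ₂def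
      have hθ₂ : 0 < θ₂ := by
        rw [hθ₂def]
        apply div_pos hθ
        linarith [hT]
      obtain ⟨d, hd, hdprop⟩ := hUCfull θ₂ hθ₂
      obtain ⟨J1, hJ1⟩ := happrox (θ/4) (by positivity)
      set δ := min (θ/4) d with hδdef
      have hδ : 0 < δ := lt_min (by positivity) hd
      obtain ⟨L, hL⟩ := hdistconv δ hδ
      set l := max L J1 with hldef
      set j := φ l with hjdef
      have hjJ1 : J1 ≤ j := le_trans (le_max_right _ _) hφmono.le_apply
      have hdistl : dist (Γ j) h ≤ δ := hL l (le_max_left _ _)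
      have hev : ∀ (s : ℝ) (hs : s ∈ Icc (0:ℝ) T), ‖γ j s - xfun s‖ ≤ δ := by
        intro s hs
        rw [hxval s hs, ← dist_eq_norm]
        have hco := BoundedContinuousFunction.dist_coe_le_dist (f := Γ j) (g := h) ⟨s, hs⟩
        rw [hΓapply] at hco
        exact hco.trans hdistl
      have hint1 : IntervalIntegrable (fun s => gradient f (γ j s)) volume 0 t :=
        (hgc.comp (hγcont j)).intervalIntegrable 0 t
      have hint2 : IntervalIntegrable (fun s => gradient f (xfun s)) volume 0 t :=
        (hgc.comp hxcont).intervalIntegrable 0 t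
      have hintdiff : ‖(∫ s in (0:ℝ)..t, -gradient f (γ j s))
          - ∫ s in (0:ℝ)..t, -gradient f (xfun s)‖ ≤ θ₂ * T := by
        rw [intervalIntegral.integral_neg, intervalIntegral.integral_neg]
        have hsw : (-(∫ s in (0:ℝ)..t, gradient f (γ j s)))
            - (-(∫ s in (0:ℝ)..t, gradient f (xfun s)))
            = (∫ s in (0:ℝ)..t, gradient f (xfun s)) - ∫ s in (0:ℝ)..t, gradient f (γ j s) := by
          abel
        rw [hsw, ← intervalIntegral.integral_sub hint2 hint1]
        refine (intervalIntegral.norm_integral_le_of_norm_le_const (C := θ₂) ?_).trans ?_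
        · intro s hs
          rw [Set.uIoc_of_le ht.1] at hs
          have hsI : s ∈ Icc (0:ℝ) T := ⟨hs.1.le, hs.2.trans ht.2⟩
          have h1 : dist (xfun s) (γ j s) ≤ d := by
            rw [dist_eq_norm, norm_sub_rev]
            exact (hev s hsI).trans (min_le_right _ _)
          exact hdprop _ (hxK' s hsI) _ (hγK' j s hsI) h1
        · rw [sub_zero]
          have h2 : |t| ≤ T := by rw [abs_of_nonneg ht.1]; exact ht.2
          exact mul_le_mul_of_nonneg_left h2 hθ₂.le
      have hap := hJ1 j hjJ1 t ht
      have hdec : xfun t - (xfun 0 + ∫ s in (0:ℝ)..t, -gradient f (xfun s)) = (xfun t - γ j t)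
          + (γ j t - (A j 0 + ∫ s in (0:ℝ)..t, -gradient f (γ j s)))
          + (A j 0 - xfun 0)
          + ((∫ s in (0:ℝ)..t, -gradient f (γ j s))
              - ∫ s in (0:ℝ)..t, -gradient f (xfun s)) := by
        abel
      have hA0x : ‖A j 0 - xfun 0‖ ≤ δ := by
        have h3 := hev 0 h0mem
        rwa [hγ0 j] at h3
      have hxt : ‖xfun t - γ j t‖ ≤ δ := by
        rw [norm_sub_rev]
        exact hev t ht
      have hδθ : δ ≤ θ/4 := min_le_left _ _
      have hθ₂T : θ₂ * T ≤ θ/4 := by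
        rw [hθ₂def, div_mul_eq_mul_div, div_le_div_iff₀ (by linarith [hT]) (by norm_num)]
        nlinarith [hT, hθ.le]
      rw [hdec]
      have htri4 : ‖(xfun t - γ j t)
          + (γ j t - (A j 0 + ∫ s in (0:ℝ)..t, -gradient f (γ j s)))
          + (A j 0 - xfun 0)
          + ((∫ s in (0:ℝ)..t, -gradient f (γ j s))
              - ∫ s in (0:ℝ)..t, -gradient f (xfun s))‖
          ≤ ‖xfun t - γ j t‖
          + ‖γ j t - (A j 0 + ∫ s in (0:ℝ)..t, -gradient f (γ j s))‖
          + ‖A j 0 - xfun 0‖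
          + ‖(∫ s in (0:ℝ)..t, -gradient f (γ j s))
              - ∫ s in (0:ℝ)..t, -gradient f (xfun s)‖ := by
        refine (norm_add_le _ _).trans ?_
        gcongr
        refine (norm_add_le _ _).trans ?_
        gcongr
        exact norm_add_le _ _
      refine htri4.trans ?_
      linarith [hxt, hap, hA0x, hintdiff, hδθ, hθ₂T]
    have hD0 : xfun t - (xfun 0 + ∫ s in (0:ℝ)..t, -gradient f (xfun s)) = 0 := by
      by_contra hne
      have hpos : 0 < ‖xfun t - (xfun 0 + ∫ s in (0:ℝ)..t, -gradient f (xfun s))‖ :=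
        norm_pos_iff.2 hne
      have hhalf := hDsmall (‖xfun t - (xfun 0 + ∫ s in (0:ℝ)..t, -gradient f (xfun s))‖/2)
        (by positivity)
      linarith
    exact sub_eq_zero.1 hD0
  -- the exact solution
  set Xsol : ℝ → EuclideanSpace ℝ (Fin n) :=
    fun t => xfun 0 + ∫ s in (0:ℝ)..t, -gradient f (xfun s) with hXdef
  have hXeq : ∀ t ∈ Icc (0:ℝ) T, Xsol t = xfun t := fun t ht => (hxeq t ht).symm
  have hXcontg : Continuous fun s => -gradient f (xfun s) := (hgc.comp hxcont).neg
  have hX0mem : Xsol 0 ∈ X₀ := by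
    have : Xsol 0 = xfun 0 := by
      rw [hXdef]
      simp
    rw [this]
    exact hx0X
  have hXderiv : ∀ t ∈ Icc (0:ℝ) T, HasDerivAt Xsol (-gradient f (Xsol t)) t := by
    intro t ht
    have h1 : HasDerivAt (fun u => ∫ s in (0:ℝ)..u, -gradient f (xfun s))
        (-gradient f (xfun t)) t :=
      intervalIntegral.integral_hasDerivAt_right (hXcontg.intervalIntegrable 0 t)
        (hXcontg.stronglyMeasurableAtFilter volume (nhds t)) hXcontg.continuousAt
    have h2 := h1.const_add (xfun 0)
    have h3 : -gradient f (xfun t) = -gradient f (Xsol t) := by rw [hXeq t ht]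
    rw [h3] at h2
    exact h2
  -- contradiction with the assumed badness
  obtain ⟨L, hL⟩ := hdistconv ε hε
  set j := φ L with hjdef2
  obtain ⟨k, hk1, hk2, hk3⟩ := hbad j Xsol hX0mem hXderiv
  set m := k - kbars j with hmdef
  have hkm : k = kbars j + m := by omega
  have hmN : m ≤ N j := by
    have hNj : ⌊T / αs j⌋₊ = N j := rfl
    omega
  have htk : (m:ℝ) * αs j ∈ Icc (0:ℝ) T := by
    constructor
    · exact mul_nonneg (Nat.cast_nonneg m) (hα0 j).le
    · have hc : (m:ℝ) ≤ (N j:ℝ) := by exact_mod_cast hmN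
      nlinarith [hNα j, (hα0 j).le, hc]
  have hXval : Xsol ((m:ℝ)*αs j) = h ⟨(m:ℝ)*αs j, htk⟩ := by
    rw [hXeq _ htk, hxval _ htk]
  have hxssval : xss j k = γ j ((m:ℝ)*αs j) := by
    rw [hkm]
    exact (hγgrid j m hmN).symm
  have hfin : ‖xss j k - Xsol ((m:ℝ)*αs j)‖ ≤ ε := by
    rw [hxssval, hXval]
    have hco := BoundedContinuousFunction.dist_coe_le_dist
      (f := Γ j) (g := h) ⟨(m:ℝ)*αs j, htk⟩
    rw [hΓapply] at hco
    rw [← dist_eq_norm]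
    exact hco.trans (hL L (le_refl L))
  exact absurd hk3 (not_lt.2 hfin)
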